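/- Let (Z_j)_{j ∈ ℕ} be a sequence of independent random variables, each sub-Gaussian with variance parameter 1. Then for every α ∈ (0,1), P(⋃_{k=1}^∞ {Σ_{j=1}^k Z_j ≥ u_α(k)}) ≤ α, where u_α(k) := 1.7 √(k (log log(2k) + 0.72 log(5.2/α))). -/

import Mathlib

open MeasureTheory ProbabilityTheory Real Set
open scoped ENNReal

open scoped Classical


noncomputable def psum (k i : ℕ) (x : {j // j ∈ Finset.range k} → ℝ) : ℝ :=
  ∑ j ∈ Finset.range i, if h : j ∈ Finset.range k then x ⟨j, h⟩ else 0

lemma psum_meas (k i : ℕ) : Measurable (psum k i) := by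
  apply Finset.measurable_sum
  intro j _
  by_cases h : j ∈ Finset.range k
  · simpa [h] using measurable_pi_apply (⟨j, h⟩ : {j // j ∈ Finset.range k})
  · simpa [h] using measurable_const

lemma psum_eq {Ω : Type*} (Z : ℕ → Ω → ℝ) (k i : ℕ) (hi : i ≤ k) (ω : Ω) :
    psum k i (fun j : {j // j ∈ Finset.range k} => Z j ω) = ∑ j ∈ Finset.range i, Z j ω := by
  refine Finset.sum_congr rfl fun j hj => ?_
  rw [dif_pos (Finset.mem_range.mpr (lt_of_lt_of_le (Finset.mem_range.mp hj) hi))]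

noncomputable def FF (t a : ℝ) (k : ℕ) (x : {j // j ∈ Finset.range k} → ℝ) : ℝ≥0∞ :=
  if (∀ i ≤ k, t * psum k i x - i * t ^ 2 / 2 < a) then
    ENNReal.ofReal (Real.exp (t * psum k k x - k * t ^ 2 / 2)) else 0

lemma FF_meas (t a : ℝ) (k : ℕ) : Measurable (FF t a k) := by
  have hset : MeasurableSet {x : {j // j ∈ Finset.range k} → ℝ |
      ∀ i ≤ k, t * psum k i x - i * t ^ 2 / 2 < a} := by
    have : {x : {j // j ∈ Finset.range k} → ℝ | ∀ i ≤ k, t * psum k i x - i * t ^ 2 / 2 < a}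
        = ⋂ i ∈ Finset.range (k+1), {x | t * psum k i x - i * t ^ 2 / 2 < a} := by
      ext x; simp [Nat.lt_succ_iff]
    rw [this]
    exact MeasurableSet.biInter (Set.to_countable _)
      fun i _ => measurableSet_lt ((measurable_const.mul (psum_meas k i)).sub measurable_const)
        measurable_const
  unfold FF
  exact Measurable.ite hset (ENNReal.measurable_ofReal.comp (Real.measurable_exp.comp
    ((measurable_const.mul (psum_meas k k)).sub measurable_const))) measurable_const

noncomputable def GG (t : ℝ) (k : ℕ) (y : {j // j ∈ ({k} : Finset ℕ)} → ℝ) : ℝ≥0∞ :=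
  ENNReal.ofReal (Real.exp (t * y ⟨k, Finset.mem_singleton_self k⟩ - t ^ 2 / 2))

lemma GG_meas (t : ℝ) (k : ℕ) : Measurable (GG t k) :=
  ENNReal.measurable_ofReal.comp (Real.measurable_exp.comp
    ((measurable_const.mul (measurable_pi_apply _)).sub measurable_const))

lemma indep_FG {Ω : Type*} [MeasurableSpace Ω] (P : Measure Ω) (Z : ℕ → Ω → ℝ)
    (hmeas : ∀ j, Measurable (Z j))
    (hindep : ProbabilityTheory.iIndepFun Z P) (t a : ℝ) (k : ℕ) :
    IndepFun (fun ω => FF t a k (fun j => Z j ω)) (fun ω => GG t k (fun j => Z j ω)) P := by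
  have base := hindep.indepFun_finset (Finset.range k) {k}
    (by simp [Finset.disjoint_left]; omega) hmeas
  exact base.comp (FF_meas t a k) (GG_meas t k)

set_option maxHeartbeats 1000000 in
lemma ville_aux {Ω : Type*} [MeasurableSpace Ω] (P : Measure Ω)
    (hP : IsProbabilityMeasure P) (Z : ℕ → Ω → ℝ) (hmeas : ∀ j, Measurable (Z j))
    (hindep : ProbabilityTheory.iIndepFun Z P)
    (hsub : ∀ j, ∀ t : ℝ,
      ∫⁻ ω, ENNReal.ofReal (Real.exp (t * Z j ω)) ∂P ≤ ENNReal.ofReal (Real.exp (t ^ 2 / 2)))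
    (t a : ℝ) (n : ℕ) :
    P {ω | ∃ k ≤ n, a ≤ t * (∑ j ∈ Finset.range k, Z j ω) - k * t ^ 2 / 2}
      ≤ ENNReal.ofReal (Real.exp (-a)) := by
  classical
  set W : ℕ → Ω → ℝ := fun k ω => t * (∑ j ∈ Finset.range k, Z j ω) - k * t ^ 2 / 2 with hW
  set X : ℕ → Ω → ℝ≥0∞ := fun k ω => ENNReal.ofReal (Real.exp (W k ω)) with hX
  have hWmeas : ∀ k, Measurable (W k) := fun k =>
    (measurable_const.mul (Finset.measurable_sum _ (fun j _ => hmeas j))).sub measurable_const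
  have hXmeas : ∀ k, Measurable (X k) := fun k =>
    ENNReal.measurable_ofReal.comp (Real.measurable_exp.comp (hWmeas k))
  set C : ℕ → Set Ω := fun k => {ω | ∀ i < k, W i ω < a} with hC
  have hCmeas : ∀ k, MeasurableSet (C k) := by
    intro k
    have : C k = ⋂ i ∈ Finset.range k, {ω | W i ω < a} := by
      ext ω; simp [hC, Finset.mem_range]
    rw [this]
    exact MeasurableSet.biInter (Set.to_countable _)
      fun i _ => measurableSet_lt (hWmeas i) measurable_const
  set B : ℕ → Set Ω := fun k => C k ∩ {ω | a ≤ W k ω} with hB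
  have hBmeas : ∀ k, MeasurableSet (B k) :=
    fun k => (hCmeas k).inter (measurableSet_le measurable_const (hWmeas k))
  have key : ∀ k, ∫⁻ ω in C (k+1), X (k+1) ω ∂P ≤ ∫⁻ ω in C (k+1), X k ω ∂P := by
    intro k
    set R : Ω → ℝ≥0∞ := fun ω => ENNReal.ofReal (Real.exp (t * Z k ω - t ^ 2 / 2)) with hR
    have hRmeas : Measurable R := ENNReal.measurable_ofReal.comp
      (Real.measurable_exp.comp ((measurable_const.mul (hmeas k)).sub measurable_const))
    set H : Ω → ℝ≥0∞ := (C (k+1)).indicator (X k) with hH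
    have hHmeas : Measurable H := (hXmeas k).indicator (hCmeas (k+1))
    have hsplit : IndepFun H R P := by
      have hHe : H = fun ω => FF t a k (fun j : {j // j ∈ Finset.range k} => Z j ω) := by
        funext ω
        have hcond : (∀ i ≤ k,
            t * psum k i (fun j : {j // j ∈ Finset.range k} => Z j ω) - i * t ^ 2 / 2 < a)
            ↔ ω ∈ C (k+1) := by
          constructor
          · intro h i hi
            have hi' : i ≤ k := Nat.lt_succ_iff.mp hi
            have h2 := h i hi'
            rwa [psum_eq Z k i hi'] at h2
          · intro h i hi
            rw [psum_eq Z k i hi]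
            exact h i (Nat.lt_succ_of_le hi)
        by_cases hc : ω ∈ C (k+1)
        · rw [hH, Set.indicator_of_mem hc]
          show X k ω = FF t a k _
          rw [FF, if_pos (hcond.mpr hc), psum_eq Z k k le_rfl]
        · rw [hH, Set.indicator_of_notMem hc]
          show (0:ℝ≥0∞) = FF t a k _
          rw [FF, if_neg (fun h => hc (hcond.mp h))]
      have hRe : R = fun ω => GG t k (fun j : {j // j ∈ ({k} : Finset ℕ)} => Z j ω) := rfl
      rw [hHe, hRe]
      exact indep_FG P Z hmeas hindep t a k
    have hRint : ∫⁻ ω, R ω ∂P ≤ 1 := by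
      have heq : ∀ ω, R ω = ENNReal.ofReal (Real.exp (t * Z k ω))
          * ENNReal.ofReal (Real.exp (-(t ^ 2 / 2))) := by
        intro ω
        simp only [hR]
        rw [show t * Z k ω - t ^ 2 / 2 = t * Z k ω + -(t ^ 2 / 2) by ring, Real.exp_add,
          ENNReal.ofReal_mul (Real.exp_nonneg _)]
      simp_rw [heq]
      have hfmeas : Measurable fun ω => ENNReal.ofReal (Real.exp (t * Z k ω)) :=
        ENNReal.measurable_ofReal.comp (Real.measurable_exp.comp (measurable_const.mul (hmeas k)))
      rw [lintegral_mul_const _ hfmeas]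
      calc ( ∫⁻ ω, ENNReal.ofReal (Real.exp (t * Z k ω)) ∂P) * ENNReal.ofReal (Real.exp (-(t ^ 2 / 2)))
          ≤ ENNReal.ofReal (Real.exp (t ^ 2 / 2)) * ENNReal.ofReal (Real.exp (-(t ^ 2 / 2))) :=
            mul_le_mul_left (hsub k t) _
        _ = 1 := by
            rw [← ENNReal.ofReal_mul (Real.exp_nonneg _), ← Real.exp_add]
            simp
    have hfact : ∀ ω, (C (k+1)).indicator (X (k+1)) ω = H ω * R ω := by
      intro ω
      by_cases hc : ω ∈ C (k+1)
      · rw [Set.indicator_of_mem hc, hH, Set.indicator_of_mem hc]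
        show X (k+1) ω = X k ω * R ω
        simp only [hX, hR]
        rw [← ENNReal.ofReal_mul (Real.exp_nonneg _), ← Real.exp_add]
        congr 1
        simp only [hW, Finset.sum_range_succ, Nat.cast_succ]
        ring
      · rw [Set.indicator_of_notMem hc, hH, Set.indicator_of_notMem hc, zero_mul]
    calc ∫⁻ ω in C (k+1), X (k+1) ω ∂P
        = ∫⁻ ω, (C (k+1)).indicator (X (k+1)) ω ∂P := (lintegral_indicator (hCmeas (k+1)) _).symm
      _ = ∫⁻ ω, (H * R) ω ∂P := by simp_rw [hfact]; rfl
      _ = (∫⁻ ω, H ω ∂P) * ∫⁻ ω, R ω ∂P :=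
          lintegral_mul_eq_lintegral_mul_lintegral_of_indepFun hHmeas hRmeas hsplit
      _ ≤ (∫⁻ ω, H ω ∂P) * 1 := mul_le_mul_right hRint _
      _ = ∫⁻ ω in C (k+1), X k ω ∂P := by
          rw [mul_one, hH, lintegral_indicator (hCmeas (k+1)) _]
  set T : ℕ → ℝ≥0∞ := fun k =>
    (∑ i ∈ Finset.range k, ∫⁻ ω in B i, X i ω ∂P) + ∫⁻ ω in C k, X k ω ∂P with hT
  have hT0 : T 0 = 1 := by
    have hC0 : C 0 = Set.univ := by ext ω; simp [hC]
    have hX0 : ∀ ω, X 0 ω = 1 := by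
      intro ω
      simp [hX, hW]
    simp [hT, hC0, hX0, measure_univ]
  have hTstep : ∀ k, T (k+1) ≤ T k := by
    intro k
    have hCsplit : C k = B k ∪ C (k+1) := by
      ext ω
      constructor
      · intro h
        by_cases ha' : a ≤ W k ω
        · exact Or.inl ⟨h, ha'⟩
        · refine Or.inr fun i hi => ?_
          rcases Nat.lt_succ_iff_lt_or_eq.mp hi with h' | h'
          · exact h i h'
          · exact h' ▸ lt_of_not_ge ha'
      · rintro (⟨h, _⟩ | h)
        · exact h
        · exact fun i hi => h i (Nat.lt_succ_of_lt hi)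
    have hdisj : Disjoint (B k) (C (k+1)) := by
      rw [Set.disjoint_left]
      rintro ω ⟨_, hge⟩ hcmem
      exact absurd hge (not_le.mpr (hcmem k (Nat.lt_succ_self k)))
    have hsplitint : ∫⁻ ω in C k, X k ω ∂P
        = ∫⁻ ω in B k, X k ω ∂P + ∫⁻ ω in C (k+1), X k ω ∂P := by
      rw [hCsplit, lintegral_union (hCmeas (k+1)) hdisj]
    show (∑ i ∈ Finset.range (k+1), ∫⁻ ω in B i, X i ω ∂P) + ∫⁻ ω in C (k+1), X (k+1) ω ∂P
      ≤ (∑ i ∈ Finset.range k, ∫⁻ ω in B i, X i ω ∂P) + ∫⁻ ω in C k, X k ω ∂P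
    calc (∑ i ∈ Finset.range (k+1), ∫⁻ ω in B i, X i ω ∂P) + ∫⁻ ω in C (k+1), X (k+1) ω ∂P
        ≤ (∑ i ∈ Finset.range (k+1), ∫⁻ ω in B i, X i ω ∂P) + ∫⁻ ω in C (k+1), X k ω ∂P :=
          add_le_add_right (key k) _
      _ = (∑ i ∈ Finset.range k, ∫⁻ ω in B i, X i ω ∂P)
          + (∫⁻ ω in B k, X k ω ∂P + ∫⁻ ω in C (k+1), X k ω ∂P) := by
          rw [Finset.sum_range_succ]; ring
      _ = (∑ i ∈ Finset.range k, ∫⁻ ω in B i, X i ω ∂P) + ∫⁻ ω in C k, X k ω ∂P := by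
          rw [hsplitint]
  have hTle : ∀ k, T k ≤ 1 := by
    intro k
    induction k with
    | zero => exact hT0.le
    | succ k ih => exact (hTstep k).trans ih
  have hsum : ∑ i ∈ Finset.range (n+1), ENNReal.ofReal (Real.exp a) * P (B i) ≤ 1 := by
    calc ∑ i ∈ Finset.range (n+1), ENNReal.ofReal (Real.exp a) * P (B i)
        ≤ ∑ i ∈ Finset.range (n+1), ∫⁻ ω in B i, X i ω ∂P := by
          refine Finset.sum_le_sum fun i _ => ?_
          rw [← setLIntegral_const]
          refine setLIntegral_mono (hXmeas i) fun ω hω => ?_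
          exact ENNReal.ofReal_le_ofReal (Real.exp_le_exp.mpr hω.2)
      _ ≤ T (n+1) := le_add_of_nonneg_right zero_le |>.trans_eq rfl
      _ ≤ 1 := hTle (n+1)
  have hsubset : {ω | ∃ k ≤ n, a ≤ t * (∑ j ∈ Finset.range k, Z j ω) - k * t ^ 2 / 2}
      ⊆ ⋃ i ∈ Finset.range (n+1), B i := by
    rintro ω ⟨k, hk, hak⟩
    have hex : ∃ k, a ≤ W k ω := ⟨k, hak⟩
    have hk0 : a ≤ W (Nat.find hex) ω := Nat.find_spec hex
    have hk0le : Nat.find hex ≤ k := Nat.find_min' hex hak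
    refine Set.mem_biUnion (Finset.mem_range.mpr (Nat.lt_succ_of_le (hk0le.trans hk))) ?_
    exact ⟨fun i hi => lt_of_not_ge (Nat.find_min hex hi), hk0⟩
  have hmain : ENNReal.ofReal (Real.exp a) * P {ω | ∃ k ≤ n,
      a ≤ t * (∑ j ∈ Finset.range k, Z j ω) - k * t ^ 2 / 2} ≤ 1 := by
    calc ENNReal.ofReal (Real.exp a) * P _
        ≤ ENNReal.ofReal (Real.exp a) * P (⋃ i ∈ Finset.range (n+1), B i) :=
          mul_le_mul_right (measure_mono hsubset) _
      _ ≤ ENNReal.ofReal (Real.exp a) * ∑ i ∈ Finset.range (n+1), P (B i) :=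
          mul_le_mul_right (measure_biUnion_finset_le _ _) _
      _ = ∑ i ∈ Finset.range (n+1), ENNReal.ofReal (Real.exp a) * P (B i) := by
          rw [Finset.mul_sum]
      _ ≤ 1 := hsum
  rw [Real.exp_neg, ENNReal.ofReal_inv_of_pos (Real.exp_pos a)]
  rw [ENNReal.le_inv_iff_mul_le, mul_comm]
  exact hmain


lemma epoch_ineq (D h k : ℝ) (hD : 0 < D) (hh : 0 < h) (hk1 : h ≤ k) (hk2 : k ≤ 2 * h) :
    5.78 / (2 + 3 / Real.sqrt 2) * D / Real.sqrt (2 * (5.78 / (2 + 3 / Real.sqrt 2) * D) / (Real.sqrt 2 * h))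
      + k * Real.sqrt (2 * (5.78 / (2 + 3 / Real.sqrt 2) * D) / (Real.sqrt 2 * h)) / 2
      ≤ 1.7 * Real.sqrt (k * D) := by
  have hr2pos : 0 < Real.sqrt 2 := Real.sqrt_pos.mpr two_pos
  have hr2sq : Real.sqrt 2 ^ 2 = 2 := Real.sq_sqrt (by norm_num)
  set r2 := Real.sqrt 2 with hr2def
  have hden : (0:ℝ) < 2 + 3 / r2 := by positivity
  set q : ℝ := 5.78 / (2 + 3 / r2) with hqdef
  have hqpos : 0 < q := by positivity
  set a : ℝ := q * D with hadef
  have hapos : 0 < a := by positivity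
  set g : ℝ := r2 * h with hgdef
  have hgpos : 0 < g := by positivity
  set t : ℝ := Real.sqrt (2 * a / g) with htdef
  have htpos : 0 < t := Real.sqrt_pos.mpr (by positivity)
  have ht2 : t ^ 2 = 2 * a / g := Real.sq_sqrt (by positivity)
  have hkpos : 0 < k := lt_of_lt_of_le hh hk1
  have hat : a / t = t * g / 2 := by
    have h2 : t * g / 2 * t = a := by
      rw [show t * g / 2 * t = t ^ 2 * g / 2 by ring, ht2]
      field_simp
    rw [div_eq_iff htpos.ne']
    linarith [h2]
  have hlhs : a / t + k * t / 2 = t * (g + k) / 2 := by rw [hat]; ring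
  rw [hlhs]
  have h17 : (1.7:ℝ) * Real.sqrt (k * D) = Real.sqrt (2.89 * (k * D)) := by
    rw [Real.sqrt_mul (by norm_num : (0:ℝ) ≤ 2.89), show Real.sqrt 2.89 = 1.7 by
      rw [show (2.89:ℝ) = 1.7 ^ 2 by norm_num]
      exact Real.sqrt_sq (by norm_num)]
  rw [h17]
  have hlnn : (0:ℝ) ≤ t * (g + k) / 2 := by
    have : (0:ℝ) < g + k := by linarith
    positivity
  have hrnn : (0:ℝ) ≤ 2.89 * (k * D) := by positivity
  rw [Real.le_sqrt hlnn hrnn]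
  have hexp : (t * (g + k) / 2) ^ 2 = 2 * a / g * (g + k) ^ 2 / 4 := by
    rw [show (t * (g + k) / 2) ^ 2 = t ^ 2 * (g + k) ^ 2 / 4 by ring, ht2]
  rw [hexp, hadef, hqdef, hgdef]
  rw [div_le_iff₀ (by norm_num : (0:ℝ) < 4)]
  have hfact : (0:ℝ) ≤ D * ((k - h) * (2 * h - k)) :=
    mul_nonneg hD.le (mul_nonneg (by linarith) (by linarith))
  field_simp
  have hr3 : r2 ^ 3 = 2 * r2 := by
    rw [pow_succ, hr2sq]
  have hr3' : r2 ^ 3 * (D * h ^ 2) = 2 * r2 * (D * h ^ 2) := by rw [hr3]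
  have key0 : (0:ℝ) ≤ r2 * D * ((k - h) * (2 * h - k)) :=
    mul_nonneg (mul_nonneg hr2pos.le hD.le)
      (mul_nonneg (by linarith) (by linarith))
  nlinarith [key0, hr3', hr2sq, mul_nonneg (by linarith : (0:ℝ) ≤ k - h) (by linarith : (0:ℝ) ≤ 2 * h - k)]


lemma rpow_n75_le {x r : ℝ} (hx : 1 ≤ x) (hr : 0 < r) (h : 1 ≤ r ^ 5 * x ^ 7) :
    x ^ (-(7/5) : ℝ) ≤ r := by
  have hx0 : (0:ℝ) < x := lt_of_lt_of_le one_pos hx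
  have key : r⁻¹ ≤ x ^ ((7/5 : ℝ)) := by
    have h5 : (r⁻¹) ^ (5:ℕ) ≤ (x ^ ((7/5:ℝ))) ^ (5:ℕ) := by
      have : (x ^ ((7/5:ℝ))) ^ (5:ℕ) = x ^ (7:ℕ) := by
        rw [← Real.rpow_natCast (x ^ ((7/5):ℝ)) 5, ← Real.rpow_mul hx0.le,
          ← Real.rpow_natCast x 7]
        norm_num
      rw [this, inv_pow]
      rw [inv_le_iff_one_le_mul₀ (by positivity)]
      linarith [h]
    exact le_of_pow_le_pow_left₀ (by norm_num) (Real.rpow_nonneg hx0.le _) h5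
  rw [Real.rpow_neg hx0.le]
  calc (x ^ ((7/5):ℝ))⁻¹ ≤ (r⁻¹)⁻¹ := by
        apply inv_anti₀ (by positivity) key
    _ = r := inv_inv r
lemma rpow_n25_le {x r : ℝ} (hx : 1 ≤ x) (hr : 0 < r) (h : 1 ≤ r ^ 5 * x ^ 2) :
    x ^ (-(2/5) : ℝ) ≤ r := by
  have hx0 : (0:ℝ) < x := lt_of_lt_of_le one_pos hx
  have key : r⁻¹ ≤ x ^ ((2/5 : ℝ)) := by
    have h5 : (r⁻¹) ^ (5:ℕ) ≤ (x ^ ((2/5:ℝ))) ^ (5:ℕ) := by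
      have : (x ^ ((2/5:ℝ))) ^ (5:ℕ) = x ^ (2:ℕ) := by
        rw [← Real.rpow_natCast (x ^ ((2/5):ℝ)) 5, ← Real.rpow_mul hx0.le,
          ← Real.rpow_natCast x 2]
        norm_num
      rw [this, inv_pow]
      rw [inv_le_iff_one_le_mul₀ (by positivity)]
      linarith [h]
    exact le_of_pow_le_pow_left₀ (by norm_num) (Real.rpow_nonneg hx0.le _) h5
  rw [Real.rpow_neg hx0.le]
  calc (x ^ ((2/5):ℝ))⁻¹ ≤ (r⁻¹)⁻¹ := by
        apply inv_anti₀ (by positivity) key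
    _ = r := inv_inv r

lemma tele {y : ℝ} (hy : 2 ≤ y) :
    y ^ (-(7/5):ℝ) ≤ 5/2 * ((y-1) ^ (-(2/5):ℝ) - y ^ (-(2/5):ℝ)) := by
  have hy0 : (0:ℝ) < y := by linarith
  have hx : (1:ℝ) ≤ y - 1 := by linarith
  have hx0 : (0:ℝ) < y - 1 := by linarith
  have hyy : y * y ^ (-(7/5):ℝ) = y ^ (-(2/5):ℝ) := by
    have h1 : y ^ (-(2/5):ℝ) = y ^ ((1:ℝ) + (-(7/5):ℝ)) := by norm_num
    rw [h1, Real.rpow_add hy0, Real.rpow_one]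
  have key : (y + 2/5) * y ^ (-(7/5):ℝ) ≤ (y-1) ^ (-(2/5):ℝ) := by
    have ha : (0:ℝ) ≤ (y + 2/5) * y ^ (-(7/5):ℝ) := by positivity
    refine le_of_pow_le_pow_left₀ (by norm_num : (5:ℕ) ≠ 0) (by positivity) ?_
    have e1 : ((y + 2/5) * y ^ (-(7/5):ℝ)) ^ (5:ℕ) = (y + 2/5)^(5:ℕ) * (y ^ (7:ℕ))⁻¹ := by
      rw [mul_pow]
      congr 1
      rw [← Real.rpow_natCast (y ^ (-(7/5):ℝ)) 5, ← Real.rpow_mul hy0.le]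
      norm_num
    have e2 : ((y-1) ^ (-(2/5):ℝ)) ^ (5:ℕ) = ((y-1) ^ (2:ℕ))⁻¹ := by
      rw [← Real.rpow_natCast ((y-1) ^ (-(2/5):ℝ)) 5, ← Real.rpow_mul hx0.le]
      norm_num
    rw [e1, e2]
    rw [mul_inv_le_iff₀ (by positivity), inv_mul_eq_div, le_div_iff₀ (by positivity)]
    nlinarith [pow_nonneg (by linarith : (0:ℝ) ≤ y - 2) 5, pow_nonneg (by linarith : (0:ℝ) ≤ y - 2) 4,
      pow_nonneg (by linarith : (0:ℝ) ≤ y - 2) 3, sq_nonneg (y-2), hy, hy0]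
  nlinarith [key, hyy, Real.rpow_nonneg hy0.le (-(7/5):ℝ)]

lemma head12 : ∑ m ∈ Finset.range 12, ((m:ℝ)+1) ^ (-(7/5):ℝ) ≤ 2.1956 := by
  have b1 : ((1:ℝ)) ^ (-(7/5):ℝ) = 1 := Real.one_rpow _
  have b2 : ((2:ℝ)) ^ (-(7/5):ℝ) ≤ 0.37893 := rpow_n75_le (by norm_num) (by norm_num) (by norm_num)
  have b3 : ((3:ℝ)) ^ (-(7/5):ℝ) ≤ 0.2149 := rpow_n75_le (by norm_num) (by norm_num) (by norm_num)
  have b4 : ((4:ℝ)) ^ (-(7/5):ℝ) ≤ 0.14359 := rpow_n75_le (by norm_num) (by norm_num) (by norm_num)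
  have b5 : ((5:ℝ)) ^ (-(7/5):ℝ) ≤ 0.10508 := rpow_n75_le (by norm_num) (by norm_num) (by norm_num)
  have b6 : ((6:ℝ)) ^ (-(7/5):ℝ) ≤ 0.0814 := rpow_n75_le (by norm_num) (by norm_num) (by norm_num)
  have b7 : ((7:ℝ)) ^ (-(7/5):ℝ) ≤ 0.0656 := rpow_n75_le (by norm_num) (by norm_num) (by norm_num)
  have b8 : ((8:ℝ)) ^ (-(7/5):ℝ) ≤ 0.05441 := rpow_n75_le (by norm_num) (by norm_num) (by norm_num)
  have b9 : ((9:ℝ)) ^ (-(7/5):ℝ) ≤ 0.04614 := rpow_n75_le (by norm_num) (by norm_num) (by norm_num)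
  have b10 : ((10:ℝ)) ^ (-(7/5):ℝ) ≤ 0.03982 := rpow_n75_le (by norm_num) (by norm_num) (by norm_num)
  have b11 : ((11:ℝ)) ^ (-(7/5):ℝ) ≤ 0.03484 := rpow_n75_le (by norm_num) (by norm_num) (by norm_num)
  have b12 : ((12:ℝ)) ^ (-(7/5):ℝ) ≤ 0.03085 := rpow_n75_le (by norm_num) (by norm_num) (by norm_num)
  rw [Finset.sum_range_succ, Finset.sum_range_succ, Finset.sum_range_succ, Finset.sum_range_succ,
    Finset.sum_range_succ, Finset.sum_range_succ, Finset.sum_range_succ, Finset.sum_range_succ,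
    Finset.sum_range_succ, Finset.sum_range_succ, Finset.sum_range_succ, Finset.sum_range_succ,
    Finset.sum_range_zero]
  push_cast
  norm_num
  linarith [b1, b2, b3, b4, b5, b6, b7, b8, b9, b10, b11, b12]

lemma zeta_part (M : ℕ) : ∑ m ∈ Finset.range M, ((m:ℝ)+1) ^ (-(7/5):ℝ) ≤ 3.13 := by
  rcases le_or_gt M 12 with hM | hM
  · calc ∑ m ∈ Finset.range M, ((m:ℝ)+1) ^ (-(7/5):ℝ)
        ≤ ∑ m ∈ Finset.range 12, ((m:ℝ)+1) ^ (-(7/5):ℝ) :=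
          Finset.sum_le_sum_of_subset_of_nonneg (Finset.range_subset_range.mpr hM)
            (fun i _ _ => by positivity)
      _ ≤ 2.1956 := head12
      _ ≤ 3.13 := by norm_num
  · have hsplit : ∑ m ∈ Finset.range 12, ((m:ℝ)+1) ^ (-(7/5):ℝ)
        + ∑ m ∈ Finset.Ico 12 M, ((m:ℝ)+1) ^ (-(7/5):ℝ)
        = ∑ m ∈ Finset.range M, ((m:ℝ)+1) ^ (-(7/5):ℝ) := by
      simp only [Finset.range_eq_Ico]
      exact Finset.sum_Ico_consecutive (fun m : ℕ => ((m:ℝ)+1) ^ (-(7/5):ℝ)) (Nat.zero_le 12) hM.le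
    have htail : ∑ m ∈ Finset.Ico 12 M, ((m:ℝ)+1) ^ (-(7/5):ℝ)
        ≤ 5/2 * ((12:ℝ) ^ (-(2/5):ℝ)) := by
      have step1 : ∑ m ∈ Finset.Ico 12 M, ((m:ℝ)+1) ^ (-(7/5):ℝ)
          ≤ ∑ m ∈ Finset.Ico 12 M, (5/2 * (((m:ℝ)) ^ (-(2/5):ℝ) - ((m:ℝ)+1) ^ (-(2/5):ℝ))) := by
        refine Finset.sum_le_sum fun m hm => ?_
        have hm12 : (12:ℕ) ≤ m := (Finset.mem_Ico.mp hm).1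
        have hy : (2:ℝ) ≤ (m:ℝ)+1 := by
          have : (12:ℝ) ≤ (m:ℝ) := by exact_mod_cast hm12
          linarith
        have := tele hy
        rwa [show ((m:ℝ)+1)-1 = (m:ℝ) by ring] at this
      refine step1.trans ?_
      have : ∑ m ∈ Finset.Ico 12 M, (5/2 * (((m:ℝ)) ^ (-(2/5):ℝ) - ((m:ℝ)+1) ^ (-(2/5):ℝ)))
          = 5/2 * ∑ m ∈ Finset.Ico 12 M, (((m:ℝ)) ^ (-(2/5):ℝ) - ((m:ℝ)+1) ^ (-(2/5):ℝ)) := by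
        rw [Finset.mul_sum]
      rw [this]
      have htel : ∑ m ∈ Finset.Ico 12 M, (((m:ℝ)) ^ (-(2/5):ℝ) - ((m:ℝ)+1) ^ (-(2/5):ℝ))
          = ((12:ℕ):ℝ) ^ (-(2/5):ℝ) - ((M:ℕ):ℝ) ^ (-(2/5):ℝ) := by
        rw [Finset.sum_Ico_eq_sum_range]
        have : ∀ i, ((12 + i : ℕ):ℝ) = ((12:ℕ):ℝ) + i := by intro i; push_cast; ring
        calc ∑ i ∈ Finset.range (M - 12),
              ((((12 + i : ℕ)):ℝ) ^ (-(2/5):ℝ) - (((12 + i : ℕ):ℝ)+1) ^ (-(2/5):ℝ))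
            = ∑ i ∈ Finset.range (M - 12),
              ((fun j => ((12 + j : ℕ):ℝ) ^ (-(2/5):ℝ)) i
                - (fun j => ((12 + j : ℕ):ℝ) ^ (-(2/5):ℝ)) (i+1)) := by
              refine Finset.sum_congr rfl fun i _ => ?_
              simp only
              congr 2
              push_cast
              ring
          _ = ((12 + 0 : ℕ):ℝ) ^ (-(2/5):ℝ) - ((12 + (M - 12) : ℕ):ℝ) ^ (-(2/5):ℝ) :=
              Finset.sum_range_sub' (fun j => ((12 + j : ℕ):ℝ) ^ (-(2/5):ℝ)) (M - 12)
          _ = ((12:ℕ):ℝ) ^ (-(2/5):ℝ) - ((M:ℕ):ℝ) ^ (-(2/5):ℝ) := by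
              have e2 : (12 + (M - 12) : ℕ) = M := by omega
              rw [show (12 + 0 : ℕ) = 12 from rfl, e2]
      rw [htel]
      have hMnn : (0:ℝ) ≤ ((M:ℕ):ℝ) ^ (-(2/5):ℝ) := Real.rpow_nonneg (by positivity) _
      have : ((12:ℕ):ℝ) = (12:ℝ) := by norm_num
      rw [this]
      nlinarith [hMnn]
    have h12b : (12:ℝ) ^ (-(2/5):ℝ) ≤ 0.37011 :=
      rpow_n25_le (by norm_num) (by norm_num) (by norm_num)
    calc ∑ m ∈ Finset.range M, ((m:ℝ)+1) ^ (-(7/5):ℝ)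
        = ∑ m ∈ Finset.range 12, ((m:ℝ)+1) ^ (-(7/5):ℝ)
          + ∑ m ∈ Finset.Ico 12 M, ((m:ℝ)+1) ^ (-(7/5):ℝ) := hsplit.symm
      _ ≤ 2.1956 + 5/2 * 0.37011 := by
          have := head12
          have h2 := htail
          have h3 : 5/2 * ((12:ℝ) ^ (-(2/5):ℝ)) ≤ 5/2 * 0.37011 := by linarith [h12b]
          linarith
      _ ≤ 3.13 := by norm_num


lemma le_rpow_72 {x r : ℝ} (hx : 1 ≤ x) (hr : 0 ≤ r) (h : r ^ 25 ≤ x ^ 18) :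
    r ≤ x ^ (0.72 : ℝ) := by
  have hx0 : (0:ℝ) < x := lt_of_lt_of_le one_pos hx
  refine le_of_pow_le_pow_left₀ (by norm_num : (25:ℕ) ≠ 0) (Real.rpow_nonneg hx0.le _) ?_
  have e : (x ^ (0.72:ℝ)) ^ (25:ℕ) = x ^ (18:ℕ) := by
    rw [← Real.rpow_natCast (x ^ (0.72:ℝ)) 25, ← Real.rpow_mul hx0.le,
      ← Real.rpow_natCast x 18]
    norm_num
  rw [e]; exact h

lemma le_rpow_75 {x r : ℝ} (hx : 1 ≤ x) (hr : 0 ≤ r) (h : r ^ 5 ≤ x ^ 7) :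
    r ≤ x ^ ((7/5) : ℝ) := by
  have hx0 : (0:ℝ) < x := lt_of_lt_of_le one_pos hx
  refine le_of_pow_le_pow_left₀ (by norm_num : (5:ℕ) ≠ 0) (Real.rpow_nonneg hx0.le _) ?_
  have e : (x ^ ((7/5):ℝ)) ^ (5:ℕ) = x ^ (7:ℕ) := by
    rw [← Real.rpow_natCast (x ^ ((7/5):ℝ)) 5, ← Real.rpow_mul hx0.le,
      ← Real.rpow_natCast x 7]
    norm_num
  rw [e]; exact h

-- basic bracketing of q
lemma q_facts : (7/5 : ℝ) ≤ 5.78 / (2 + 3 / Real.sqrt 2) := by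
  have h1 : (1.414:ℝ) ≤ Real.sqrt 2 := by
    nlinarith [Real.sqrt_nonneg 2, Real.sq_sqrt (show (0:ℝ) ≤ 2 by norm_num)]
  have hpos : (0:ℝ) < Real.sqrt 2 := by linarith
  have h2 : 3 / Real.sqrt 2 ≤ 3 / 1.414 := by
    apply div_le_div_of_nonneg_left (by norm_num) (by norm_num) h1
  have h3 : 2 + 3 / Real.sqrt 2 ≤ 4.1217 := by
    have : (3:ℝ) / 1.414 ≤ 2.1217 := by norm_num
    linarith
  have h4 : (0:ℝ) < 2 + 3 / Real.sqrt 2 := by positivity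
  rw [le_div_iff₀ h4]
  nlinarith [h3]

lemma sum_delta (α : ℝ) (hα0 : 0 < α) (hα1 : α < 1) (M : ℕ) :
    ∑ m ∈ Finset.range M, Real.exp (-(5.78 / (2 + 3 / Real.sqrt 2)
      * (Real.log (((m:ℝ)+1) * Real.log 2) + 0.72 * Real.log (5.2 / α)))) ≤ α := by
  have hl2pos : (0:ℝ) < Real.log 2 := Real.log_pos (by norm_num)
  have hl2lb : (0.69314:ℝ) ≤ Real.log 2 := by
    have := Real.log_two_gt_d9
    linarith
  set q : ℝ := 5.78 / (2 + 3 / Real.sqrt 2) with hqdef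
  have hq75 : (7/5:ℝ) ≤ q := q_facts
  have hqpos : (0:ℝ) < q := by linarith
  have hs1 : (1:ℝ) ≤ 0.72 * q := by linarith
  clear_value q
  have hβpos : (0:ℝ) < α / 5.2 := by positivity
  have hβle : α / 5.2 ≤ 1/5.2 := (div_le_div_iff_of_pos_right (by norm_num : (0:ℝ) < 5.2)).mpr hα1.le
  -- the common factor
  set c : ℝ := Real.log 2 ^ (-q : ℝ) * (α / 5.2) ^ (0.72 * q) with hcdef
  have hcpos : (0:ℝ) < c := by
    apply mul_pos (Real.rpow_pos_of_pos hl2pos _) (Real.rpow_pos_of_pos hβpos _)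
  clear_value c
  -- per-term identity
  have hterm : ∀ m : ℕ, Real.exp (-(q * (Real.log (((m:ℝ)+1) * Real.log 2)
      + 0.72 * Real.log (5.2 / α)))) = ((m:ℝ)+1) ^ (-q : ℝ) * c := by
    intro m
    have h0m : (0:ℝ) ≤ (m:ℝ) := Nat.cast_nonneg m
    have hm1 : (1:ℝ) ≤ (m:ℝ)+1 := by linarith
    have hmpos : (0:ℝ) < (m:ℝ)+1 := by linarith
    have hmlpos : (0:ℝ) < ((m:ℝ)+1) * Real.log 2 := by positivity
    have h52α : (0:ℝ) < 5.2 / α := by positivity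
    have e1 : Real.exp (-(q * (Real.log (((m:ℝ)+1) * Real.log 2) + 0.72 * Real.log (5.2 / α))))
        = Real.exp (Real.log (((m:ℝ)+1) * Real.log 2) * (-q))
          * Real.exp (Real.log (5.2 / α) * (-(0.72 * q))) := by
      rw [← Real.exp_add]
      congr 1
      ring
    rw [e1]
    rw [← Real.rpow_def_of_pos hmlpos, ← Real.rpow_def_of_pos h52α]
    rw [Real.mul_rpow hmpos.le hl2pos.le]
    have e2 : (5.2 / α) ^ (-(0.72 * q) : ℝ) = (α / 5.2) ^ (0.72 * q : ℝ) := by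
      rw [Real.rpow_neg h52α.le, ← Real.inv_rpow h52α.le, inv_div]
    rw [e2, hcdef]
    ring
  -- termwise bound by exponent 7/5
  have htermle : ∀ m : ℕ, ((m:ℝ)+1) ^ (-q : ℝ) * c ≤ ((m:ℝ)+1) ^ (-(7/5) : ℝ) * c := by
    intro m
    have h0m : (0:ℝ) ≤ (m:ℝ) := Nat.cast_nonneg m
    have hm1 : (1:ℝ) ≤ (m:ℝ)+1 := by linarith
    apply mul_le_mul_of_nonneg_right _ hcpos.le
    exact Real.rpow_le_rpow_of_exponent_le hm1 (by linarith)
  -- sum bound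
  have hsum : ∑ m ∈ Finset.range M, Real.exp (-(q * (Real.log (((m:ℝ)+1) * Real.log 2)
      + 0.72 * Real.log (5.2 / α)))) ≤ 3.13 * c := by
    calc ∑ m ∈ Finset.range M, Real.exp (-(q * (Real.log (((m:ℝ)+1) * Real.log 2)
          + 0.72 * Real.log (5.2 / α))))
        = ∑ m ∈ Finset.range M, ((m:ℝ)+1) ^ (-q : ℝ) * c := by
          exact Finset.sum_congr rfl fun m _ => hterm m
      _ ≤ ∑ m ∈ Finset.range M, ((m:ℝ)+1) ^ (-(7/5) : ℝ) * c :=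
          Finset.sum_le_sum fun m _ => htermle m
      _ = (∑ m ∈ Finset.range M, ((m:ℝ)+1) ^ (-(7/5) : ℝ)) * c := by
          rw [← Finset.sum_mul]
      _ ≤ 3.13 * c := mul_le_mul_of_nonneg_right (zeta_part M) hcpos.le
  -- final numeric bound : 3.13 * c ≤ α
  have hfinal : 3.13 * c ≤ α := by
    -- c = (log 2)^(-q) * β^s  with β ≤ 1/5.2, s ≥ 1
    have hb52 : (3.277:ℝ) ≤ (5.2:ℝ) ^ (0.72:ℝ) :=
      le_rpow_72 (by norm_num) (by norm_num) (by norm_num)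
    have hblb : (2.2713:ℝ) ≤ Real.log 2 * (5.2:ℝ) ^ (0.72:ℝ) := by
      nlinarith [hl2lb, hb52, Real.rpow_nonneg (show (0:ℝ) ≤ 5.2 by norm_num) (0.72:ℝ)]
    have hbig : (3.13:ℝ) ≤ (Real.log 2 * (5.2:ℝ) ^ (0.72:ℝ)) ^ ((7/5):ℝ) := by
      have h1 : (3.13:ℝ) ≤ (2.2713:ℝ) ^ ((7/5):ℝ) :=
        le_rpow_75 (by norm_num) (by norm_num) (by norm_num)
      have h2 : (2.2713:ℝ) ^ ((7/5):ℝ) ≤ (Real.log 2 * (5.2:ℝ) ^ (0.72:ℝ)) ^ ((7/5):ℝ) :=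
        Real.rpow_le_rpow (by norm_num) hblb (by norm_num)
      linarith
    have hbpos : (0:ℝ) < Real.log 2 * (5.2:ℝ) ^ (0.72:ℝ) := by linarith
    have hbig2 : (3.13:ℝ) ≤ (Real.log 2 * (5.2:ℝ) ^ (0.72:ℝ)) ^ (q:ℝ) := by
      refine hbig.trans (Real.rpow_le_rpow_of_exponent_le (by linarith) hq75)
    have hfin : (3.13:ℝ) ≤ Real.log 2 ^ (q:ℝ) * (5.2:ℝ) ^ (0.72 * q : ℝ) := by
      rw [Real.rpow_mul (by norm_num : (0:ℝ) ≤ 5.2)]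
      rwa [Real.mul_rpow hl2pos.le (Real.rpow_nonneg (by norm_num) _)] at hbig2
    set L : ℝ := Real.log 2 ^ (q:ℝ) with hLdef
    have hL : (0:ℝ) < L := Real.rpow_pos_of_pos hl2pos _
    clear_value L
    set E : ℝ := (5.2:ℝ) ^ (0.72 * q - 1 : ℝ) with hEdef
    have hE : (0:ℝ) < E := Real.rpow_pos_of_pos (by norm_num) _
    clear_value E
    have h52E : (5.2:ℝ) * E = (5.2:ℝ) ^ (0.72 * q : ℝ) := by
      have h := Real.rpow_add (by norm_num : (0:ℝ) < 5.2) 1 (0.72 * q - 1)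
      rw [Real.rpow_one] at h
      rw [hEdef, ← h]
      congr 1
      ring
    have hLE : (3.13:ℝ) ≤ L * (5.2 * E) := by rw [h52E]; exact hfin
    have hc_le : c ≤ L⁻¹ * ((α/5.2) * E⁻¹) := by
      rw [hcdef]
      have e3 : Real.log 2 ^ (-q : ℝ) = L⁻¹ := by
        rw [hLdef, ← Real.rpow_neg hl2pos.le]
      have e4 : (α / 5.2) ^ (0.72 * q : ℝ) ≤ (α/5.2) * E⁻¹ := by
        have e5 : (α / 5.2) ^ (0.72 * q : ℝ)
            = (α/5.2) * (α/5.2) ^ (0.72 * q - 1 : ℝ) := by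
          have h := Real.rpow_add hβpos 1 (0.72 * q - 1)
          rw [Real.rpow_one] at h
          rw [← h]
          congr 1
          ring
        have e6 : (α/5.2) ^ (0.72 * q - 1 : ℝ) ≤ (1/5.2 : ℝ) ^ (0.72 * q - 1 : ℝ) :=
          Real.rpow_le_rpow hβpos.le hβle (by linarith)
        have e7 : (1/5.2 : ℝ) ^ (0.72 * q - 1 : ℝ) = E⁻¹ := by
          rw [hEdef, one_div, ← Real.inv_rpow (by norm_num : (0:ℝ) ≤ 5.2)]
        rw [e5]
        calc (α/5.2) * (α/5.2) ^ (0.72 * q - 1 : ℝ)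
            ≤ (α/5.2) * (1/5.2 : ℝ) ^ (0.72 * q - 1 : ℝ) :=
              mul_le_mul_of_nonneg_left e6 hβpos.le
          _ = (α/5.2) * E⁻¹ := by rw [e7]
      rw [e3]
      exact mul_le_mul_of_nonneg_left e4 (inv_nonneg.mpr hL.le)
    calc 3.13 * c ≤ 3.13 * (L⁻¹ * ((α/5.2) * E⁻¹)) := by
          exact mul_le_mul_of_nonneg_left hc_le (by norm_num)
      _ = 3.13 * (α/5.2) * (L⁻¹ * E⁻¹) := by ring
      _ ≤ α := by
          have hα52 : 5.2 * (α/5.2) = α := by ring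
          have hkey : 3.13 * (α/5.2) ≤ α * (L * E) := by
            nlinarith [mul_le_mul_of_nonneg_right hLE hβpos.le, hα52]
          have hinv : (0:ℝ) ≤ L⁻¹ * E⁻¹ :=
            mul_nonneg (inv_nonneg.mpr hL.le) (inv_nonneg.mpr hE.le)
          have h5 := mul_le_mul_of_nonneg_right hkey hinv
          rw [show α * (L * E) * (L⁻¹ * E⁻¹) = α * (L * L⁻¹) * (E * E⁻¹) by ring,
            mul_inv_cancel₀ hL.ne', mul_inv_cancel₀ hE.ne', mul_one, mul_one] at h5
          linarith
  exact hsum.trans hfinal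


/-- Finite-LIL time-uniform boundary (Howard et al., 2021): for independent sub-Gaussian
increments with variance parameter 1, the running sums stay below
`u_α(k) = 1.7 √(k (log log (2k) + 0.72 log(5.2/α)))` simultaneously for all `k ≥ 1`,
with probability at least `1 - α`. -/
theorem statement1 {Ω : Type*} [MeasurableSpace Ω] (P : Measure Ω)
    (hP : IsProbabilityMeasure P) (Z : ℕ → Ω → ℝ) (hmeas : ∀ j, Measurable (Z j))
    (hindep : ProbabilityTheory.iIndepFun Z P)
    (hsub : ∀ j, ∀ t : ℝ,
      ∫⁻ ω, ENNReal.ofReal (Real.exp (t * Z j ω)) ∂P ≤ ENNReal.ofReal (Real.exp (t ^ 2 / 2)))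
    (α : ℝ) (hα : α ∈ Set.Ioo (0 : ℝ) 1) :
    P {ω | ∃ k : ℕ, 1 ≤ k ∧
        1.7 * Real.sqrt (k * (Real.log (Real.log (2 * k)) + 0.72 * Real.log (5.2 / α)))
          ≤ ∑ j ∈ Finset.range k, Z j ω} ≤ ENNReal.ofReal α := by
  obtain ⟨hα0, hα1⟩ := hα
  have hl2pos : (0:ℝ) < Real.log 2 := Real.log_pos (by norm_num)
  have hl2lb : (0.69314:ℝ) ≤ Real.log 2 := by
    have := Real.log_two_gt_d9; linarith
  -- definitions
  set A : ℝ := 0.72 * Real.log (5.2 / α) with hAdef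
  set D : ℕ → ℝ := fun m => Real.log (((m:ℝ)+1) * Real.log 2) + A with hDdef
  set am : ℕ → ℝ := fun m => 5.78 / (2 + 3 / Real.sqrt 2) * D m with hamdef
  set tm : ℕ → ℝ := fun m =>
    Real.sqrt (2 * (5.78 / (2 + 3 / Real.sqrt 2) * D m) / (Real.sqrt 2 * (2:ℝ)^m)) with htmdef
  -- positivity of D
  have hA9 : (0.9:ℝ) ≤ A := by
    have h4 : Real.log ((2:ℝ)^(2:ℕ)) ≤ Real.log (5.2 / α) := by
      apply Real.log_le_log (by positivity)
      rw [le_div_iff₀ hα0]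
      nlinarith
    rw [Real.log_pow] at h4
    push_cast at h4
    rw [hAdef]
    nlinarith [h4, hl2lb]
  have hDpos : ∀ m : ℕ, 0 < D m := by
    intro m
    have h0m : (0:ℝ) ≤ (m:ℝ) := Nat.cast_nonneg m
    have hmono : Real.log (Real.log 2) ≤ Real.log (((m:ℝ)+1) * Real.log 2) := by
      apply Real.log_le_log hl2pos
      nlinarith
    have hinv : (Real.log 2)⁻¹ ≤ (0.69314:ℝ)⁻¹ := by
      apply inv_anti₀ (by norm_num) hl2lb
    have hlb : Real.log ((Real.log 2)⁻¹) ≤ (Real.log 2)⁻¹ - 1 :=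
      Real.log_le_sub_one_of_pos (by positivity)
    rw [Real.log_inv] at hlb
    have : (-0.45:ℝ) ≤ Real.log (Real.log 2) := by
      have : ((0.69314:ℝ))⁻¹ ≤ 1.4428 := by norm_num
      linarith
    simp only [hDdef]
    nlinarith [hmono, hA9]
  have hampos : ∀ m : ℕ, 0 < am m := by
    intro m
    have hr2pos : (0:ℝ) < Real.sqrt 2 := Real.sqrt_pos.mpr two_pos
    have : (0:ℝ) < 5.78 / (2 + 3 / Real.sqrt 2) := by positivity
    simp only [hamdef]
    exact mul_pos this (hDpos m)
  -- epoch events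
  set Em : ℕ → Set Ω := fun m => {ω | ∃ k ≤ 2^(m+1) - 1,
    am m ≤ tm m * (∑ j ∈ Finset.range k, Z j ω) - k * (tm m) ^ 2 / 2} with hEmdef
  have hincl : {ω | ∃ k : ℕ, 1 ≤ k ∧
      1.7 * Real.sqrt (k * (Real.log (Real.log (2 * k)) + 0.72 * Real.log (5.2 / α)))
        ≤ ∑ j ∈ Finset.range k, Z j ω} ⊆ ⋃ m, Em m := by
    rintro ω ⟨k, hk1, hk2⟩
    have hkpos : k ≠ 0 := by omega
    set m := Nat.log 2 k with hmdef
    have hklow : 2^m ≤ k := Nat.pow_log_le_self 2 hkpos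
    have hkhigh : k < 2^(m+1) := Nat.lt_pow_succ_log_self (by norm_num) k
    have hh : ((2:ℝ))^m ≤ (k:ℝ) := by exact_mod_cast hklow
    have hk2h : (k:ℝ) ≤ 2 * (2:ℝ)^m := by
      have : (k:ℝ) < (2:ℝ)^(m+1) := by exact_mod_cast hkhigh
      rw [pow_succ] at this
      linarith
    have h2mpos : (0:ℝ) < (2:ℝ)^m := by positivity
    have hEi : am m / tm m + (k:ℝ) * tm m / 2 ≤ 1.7 * Real.sqrt ((k:ℝ) * D m) :=
      epoch_ineq (D m) ((2:ℝ)^m) (k:ℝ) (hDpos m) h2mpos hh hk2h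
    -- boundary comparison
    have hl1 : ((m:ℝ)+1) * Real.log 2 ≤ Real.log (2*(k:ℝ)) := by
      have h2k : (2:ℝ)^(m+1) ≤ 2*(k:ℝ) := by
        rw [pow_succ]
        nlinarith
      have := Real.log_le_log (by positivity) h2k
      rw [Real.log_pow] at this
      push_cast at this
      linarith [this]
    have hl2 : Real.log (((m:ℝ)+1) * Real.log 2) ≤ Real.log (Real.log (2*(k:ℝ))) := by
      apply Real.log_le_log (by positivity) hl1
    have hsqle : Real.sqrt ((k:ℝ) * D m)
        ≤ Real.sqrt ((k:ℝ) * (Real.log (Real.log (2*(k:ℝ))) + A)) := by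
      apply Real.sqrt_le_sqrt
      have hknn : (0:ℝ) ≤ (k:ℝ) := Nat.cast_nonneg k
      have : D m ≤ Real.log (Real.log (2*(k:ℝ))) + A := by
        simp only [hDdef]; linarith
      nlinarith
    have hS : 1.7 * Real.sqrt ((k:ℝ) * (Real.log (Real.log (2*(k:ℝ))) + A))
        ≤ ∑ j ∈ Finset.range k, Z j ω := hk2
    have hchain : am m / tm m + (k:ℝ) * tm m / 2 ≤ ∑ j ∈ Finset.range k, Z j ω := by
      calc am m / tm m + (k:ℝ) * tm m / 2 ≤ 1.7 * Real.sqrt ((k:ℝ) * D m) := hEi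
        _ ≤ 1.7 * Real.sqrt ((k:ℝ) * (Real.log (Real.log (2*(k:ℝ))) + A)) := by linarith
        _ ≤ ∑ j ∈ Finset.range k, Z j ω := hS
    have htmpos : 0 < tm m := by
      simp only [htmdef]
      apply Real.sqrt_pos.mpr
      have hr2pos : (0:ℝ) < Real.sqrt 2 := Real.sqrt_pos.mpr two_pos
      have hden : (0:ℝ) < 2 + 3 / Real.sqrt 2 := by positivity
      have := hDpos m
      positivity
    refine Set.mem_iUnion.mpr ⟨m, ⟨k, by omega, ?_⟩⟩
    have e : tm m * (am m / tm m + (k:ℝ) * tm m / 2) = am m + (k:ℝ)*(tm m)^2/2 := by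
      field_simp
    have h6 := mul_le_mul_of_nonneg_left hchain htmpos.le
    rw [e] at h6
    linarith
  -- union bound
  have hvil : ∀ m : ℕ, P (Em m) ≤ ENNReal.ofReal (Real.exp (-(am m))) := by
    intro m
    exact ville_aux P hP Z hmeas hindep hsub (tm m) (am m) (2^(m+1)-1)
  have hfin : ∀ M : ℕ, ∑ m ∈ Finset.range M, ENNReal.ofReal (Real.exp (-(am m)))
      ≤ ENNReal.ofReal α := by
    intro M
    rw [← ENNReal.ofReal_sum_of_nonneg (fun m _ => Real.exp_nonneg _)]
    apply ENNReal.ofReal_le_ofReal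
    have := sum_delta α hα0 hα1 M
    simp only [hamdef, hDdef, hAdef]
    exact this
  calc P {ω | ∃ k : ℕ, 1 ≤ k ∧
        1.7 * Real.sqrt (k * (Real.log (Real.log (2 * k)) + 0.72 * Real.log (5.2 / α)))
          ≤ ∑ j ∈ Finset.range k, Z j ω}
      ≤ P (⋃ m, Em m) := measure_mono hincl
    _ ≤ ∑' m, P (Em m) := measure_iUnion_le _
    _ ≤ ∑' m, ENNReal.ofReal (Real.exp (-(am m))) := ENNReal.tsum_le_tsum hvil
    _ ≤ ENNReal.ofReal α := by
        rw [ENNReal.tsum_eq_iSup_sum]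
        apply iSup_le
        intro s
        obtain ⟨n, hn⟩ := s.exists_nat_subset_range
        exact (Finset.sum_le_sum_of_subset hn).trans (hfin n)
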